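/- arXiv:math/0505251 — 2 statements merged into one kernel-verified Lean document; each statement's English description precedes it below -/
import Mathlib

section
/- Let Ω ⊆ ℂ be a bounded open set, let z ∈ Ω, let c ∈ ℂ, and let B = !![z, 0; c, z]. Suppose that ‖r(B)‖ ≤ 1 for every admissible rational function r = p/q for Ω with ‖r‖_Ω ≤ 1 and p.eval z = 0 (equivalently, r(z) = 0). Then ‖r(B)‖ ≤ 1 for every admissible rational function r for Ω with ‖r‖_Ω ≤ 1. -/
open Matrix Complex Polynomial

/-- The operator norm (on the Euclidean space `ℂ²`) of the value of the rational
function `p/q` at the `2 × 2` matrix `B`. -/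
noncomputable def ratNormAt (B : Matrix (Fin 2) (Fin 2) ℂ) (p q : Polynomial ℂ) : ℝ :=
  ‖Matrix.toEuclideanCLM (𝕜 := ℂ) (Polynomial.aeval B p * (Polynomial.aeval B q)⁻¹)‖

section aux

lemma coord_le_norm (x : EuclideanSpace ℂ (Fin 2)) (i : Fin 2) : ‖x i‖ ≤ ‖x‖ := by
  rw [EuclideanSpace.norm_eq, Fin.sum_univ_two]
  rw [show ‖x i‖ = Real.sqrt (‖x i‖^2) from (Real.sqrt_sq (norm_nonneg _)).symm]
  refine Real.sqrt_le_sqrt ?_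
  fin_cases i
  · exact le_add_of_nonneg_right (sq_nonneg _)
  · exact le_add_of_nonneg_left (sq_nonneg _)

lemma euc_apply (M : Matrix (Fin 2) (Fin 2) ℂ) (v : EuclideanSpace ℂ (Fin 2)) (i : Fin 2) :
    (toEuclideanCLM (𝕜 := ℂ) M) v i = M i 0 * v 0 + M i 1 * v 1 := by
  have h2 : (toEuclideanCLM (𝕜 := ℂ) M) v i = (WithLp.equiv _ _ ((toEuclideanCLM (𝕜 := ℂ) M) v)) i := rfl
  rw [Matrix.ofLp_toEuclideanCLM]
  simp [Matrix.toLin'_apply, Matrix.mulVec, dotProduct, Fin.sum_univ_two]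

lemma abs_le_norm (M : Matrix (Fin 2) (Fin 2) ℂ) :
    ‖M 1 0‖ ≤ ‖toEuclideanCLM (𝕜 := ℂ) M‖ := by
  set v : EuclideanSpace ℂ (Fin 2) := (WithLp.equiv 2 (Fin 2 → ℂ)).symm ![1,0] with hvdef
  have hv : ‖v‖ = 1 := by
    rw [EuclideanSpace.norm_eq, Fin.sum_univ_two]
    norm_num [hvdef]
  have h1 : ‖(toEuclideanCLM (𝕜 := ℂ) M) v‖ ≤ ‖toEuclideanCLM (𝕜 := ℂ) M‖ := by
    have := (toEuclideanCLM (𝕜 := ℂ) M).le_opNorm v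
    rwa [hv, mul_one] at this
  refine le_trans (le_trans ?_ (coord_le_norm _ 1)) h1
  have h0 : (toEuclideanCLM (𝕜 := ℂ) M) v 1 = M 1 0 := by
    rw [euc_apply]
    show M 1 0 * (1:ℂ) + M 1 1 * (0:ℂ) = M 1 0
    ring
  rw [h0]

lemma norm_tri_le (a t : ℂ) (ha : ‖a‖ ≤ 1) (ht : ‖t‖ ≤ 1 - ‖a‖ ^ 2) :
    ‖toEuclideanCLM (𝕜 := ℂ) !![a, 0; t, a]‖ ≤ 1 := by
  refine ContinuousLinearMap.opNorm_le_bound _ zero_le_one fun v => ?_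
  rw [one_mul, EuclideanSpace.norm_eq, EuclideanSpace.norm_eq, Fin.sum_univ_two, Fin.sum_univ_two]
  refine Real.sqrt_le_sqrt ?_
  rw [euc_apply, euc_apply]
  show ‖a * v 0 + 0 * v 1‖ ^ 2 + ‖t * v 0 + a * v 1‖ ^ 2 ≤ ‖v 0‖^2 + ‖v 1‖^2
  set x := ‖v 0‖; set y := ‖v 1‖
  have hx : 0 ≤ x := norm_nonneg _
  have hy : 0 ≤ y := norm_nonneg _
  have hα : 0 ≤ ‖a‖ := norm_nonneg a
  have hτ : 0 ≤ ‖t‖ := norm_nonneg t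
  set α := ‖a‖; set τ := ‖t‖
  have h1 : ‖a * v 0 + 0 * v 1‖ = α * x := by
    simp only [zero_mul, add_zero]; rw [norm_mul]
  have h2 : ‖t * v 0 + a * v 1‖ ≤ τ * x + α * y := by
    refine le_trans (norm_add_le _ _) ?_
    rw [norm_mul, norm_mul]
  have e2 : ‖t * v 0 + a * v 1‖ ^ 2 ≤ (τ * x + α * y)^2 :=
    pow_le_pow_left₀ (norm_nonneg _) h2 2
  rw [h1]
  have hid : (1-α^2) * (x^2 + y^2 - (α*x)^2 - (τ*x+α*y)^2)
      = (τ*α*x - (1-α^2)*y)^2 + ((1-α^2)^2 - τ^2)*x^2 := by ring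
  have hs0 : 0 ≤ 1 - α^2 := le_trans hτ ht
  rcases hs0.eq_or_lt with h|h
  · have hτ0 : τ = 0 := le_antisymm (by linarith) hτ
    have hα2 : α^2 = 1 := by linarith
    have h3 : (τ * x + α * y) ^ 2 = y ^ 2 := by
      rw [hτ0, zero_mul, zero_add, mul_pow, hα2, one_mul]
    have h4 : (α * x) ^ 2 = x ^ 2 := by rw [mul_pow, hα2, one_mul]
    linarith [e2, h3 ▸ e2]
  · nlinarith [e2, hid, sq_nonneg (τ*α*x - (1-α^2)*y),
      mul_nonneg (mul_nonneg (by linarith : (0:ℝ) ≤ 1-α^2-τ) (by linarith : (0:ℝ) ≤ 1-α^2+τ)) (sq_nonneg x)]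

lemma aeval_tri (z c : ℂ) (p : Polynomial ℂ) :
    Polynomial.aeval !![z, 0; c, z] p
      = !![p.eval z, 0; c * p.derivative.eval z, p.eval z] := by
  induction p using Polynomial.induction_on with
  | C a =>
      simp [Polynomial.aeval_C, Algebra.algebraMap_eq_smul_one]
      ext i j
      fin_cases i <;> fin_cases j <;> simp [Matrix.smul_apply, Matrix.one_apply]
  | add p q hp hq =>
      simp [map_add, hp, hq]
      ring
  | monomial n a ih =>
      have h1 : Polynomial.C a * Polynomial.X ^ (n + 1) = Polynomial.C a * Polynomial.X ^ n * Polynomial.X := by ring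
      rw [h1, _root_.map_mul, ih, Polynomial.aeval_X]
      have hd : Polynomial.derivative (Polynomial.C a * Polynomial.X ^ n * Polynomial.X)
          = Polynomial.derivative (Polynomial.C a * Polynomial.X ^ n) * Polynomial.X
            + Polynomial.C a * Polynomial.X ^ n := by
        rw [Polynomial.derivative_mul, Polynomial.derivative_X, mul_one]
      rw [hd]
      ext i j
      fin_cases i <;> fin_cases j <;>
        simp [Matrix.mul_apply, Fin.sum_univ_two] <;> ring

lemma ratval_tri (z c : ℂ) (p q : Polynomial ℂ) (hq : q.eval z ≠ 0) :
    Polynomial.aeval !![z, 0; c, z] p * (Polynomial.aeval !![z, 0; c, z] q)⁻¹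
      = !![p.eval z / q.eval z, 0;
           c * (p.derivative.eval z * q.eval z - p.eval z * q.derivative.eval z) / q.eval z ^ 2,
           p.eval z / q.eval z] := by
  set Q := q.eval z
  set Q' := q.derivative.eval z
  have hinv : (Polynomial.aeval !![z, 0; c, z] q)⁻¹
      = !![1/Q, 0; -c*Q'/Q^2, 1/Q] := by
    refine Matrix.inv_eq_right_inv ?_
    rw [aeval_tri]
    ext i j
    fin_cases i <;> fin_cases j <;>
      simp [Matrix.mul_apply, Fin.sum_univ_two, Matrix.one_apply] <;> field_simp <;> ring
  rw [aeval_tri, hinv]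
  ext i j
  fin_cases i <;> fin_cases j <;>
    simp [Matrix.mul_apply, Fin.sum_univ_two] <;> field_simp <;> ring

lemma nsq_id (P Q A : ℂ) (μ : ℝ) :
    Complex.normSq ((μ:ℂ)*P - (μ:ℂ)*A*Q) + (1-μ^2*Complex.normSq A)*(Complex.normSq Q - μ^2*Complex.normSq P)
      = Complex.normSq (Q - (μ:ℂ)^2 * (starRingEnd ℂ) A * P) := by
  rw [show ((μ:ℂ))^2 = ((μ^2:ℝ):ℂ) by push_cast; ring]
  simp only [Complex.normSq_apply, Complex.sub_re, Complex.sub_im, Complex.mul_re, Complex.mul_im,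
    Complex.ofReal_re, Complex.ofReal_im, Complex.conj_re, Complex.conj_im]
  ring

end aux

theorem stmt_8 (Ω : Set ℂ) (hΩo : IsOpen Ω) (hΩb : Bornology.IsBounded Ω)
    (z : ℂ) (hzΩ : z ∈ Ω) (c : ℂ)
    (B : Matrix (Fin 2) (Fin 2) ℂ) (hB : B = !![z, 0; c, z])
    (hyp : ∀ p q : Polynomial ℂ,
      (∀ w ∈ closure Ω, q.eval w ≠ 0) →
      (∀ w ∈ closure Ω, ‖p.eval w / q.eval w‖ ≤ 1) →
      p.eval z = 0 → ratNormAt B p q ≤ 1) :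
    ∀ p q : Polynomial ℂ,
      (∀ w ∈ closure Ω, q.eval w ≠ 0) →
      (∀ w ∈ closure Ω, ‖p.eval w / q.eval w‖ ≤ 1) →
      ratNormAt B p q ≤ 1 := by
  intro p q hq hsup
  have hzc : z ∈ closure Ω := subset_closure hzΩ
  have hQ : q.eval z ≠ 0 := hq z hzc
  have hQpos : 0 < ‖q.eval z‖ := norm_pos_iff.mpr hQ
  set a : ℂ := p.eval z / q.eval z with ha_def
  have hPa : p.eval z = a * q.eval z := by rw [ha_def, div_mul_cancel₀ _ hQ]
  have ha1 : ‖a‖ ≤ 1 := hsup z hzc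
  have habs : ∀ w ∈ closure Ω, ‖p.eval w‖ ≤ ‖q.eval w‖ := by
    intro w hw
    have h1 := hsup w hw
    rw [norm_div] at h1
    exact (div_le_one (norm_pos_iff.mpr (hq w hw))).mp h1
  set t : ℂ := c * (p.derivative.eval z * q.eval z - p.eval z * q.derivative.eval z) / q.eval z ^ 2 with ht_def
  unfold ratNormAt
  rw [hB, ratval_tri z c p q hQ]
  refine norm_tri_le a t ha1 ?_
  -- only remains: |t| ≤ 1 - |a|²
  set K := ‖c‖ * ‖p.derivative.eval z - a * q.derivative.eval z‖
      / ‖q.eval z‖ with hK_def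
  have hKt : ‖t‖ = K := by
    rw [ht_def, hK_def, hPa]
    rw [show p.derivative.eval z * q.eval z - a * q.eval z * q.derivative.eval z
        = (p.derivative.eval z - a * q.derivative.eval z) * q.eval z from by ring]
    rw [norm_div, norm_mul, norm_mul, norm_pow]
    field_simp
  rw [hKt]
  have hK0 : 0 ≤ K := by positivity
  have key : ∀ μ : ℝ, μ ∈ Set.Ioo (0:ℝ) 1 → μ * K ≤ 1 - μ^2 * ‖a‖ ^ 2 := by
    rintro μ ⟨hμ0, hμ1⟩
    set m : ℂ := (μ:ℂ) with hm_def
    have hmabs : ‖m‖ = μ := by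
      rw [hm_def, Complex.norm_real, Real.norm_eq_abs, abs_of_pos hμ0]
    set pμ := Polynomial.C m * p - Polynomial.C (m*a) * q with hpμ
    set qμ := q - Polynomial.C (m^2 * (starRingEnd ℂ) a) * p with hqμ
    have hqμev : ∀ w : ℂ, qμ.eval w = q.eval w - m^2 * (starRingEnd ℂ) a * p.eval w := by
      intro w; simp [hqμ]
    have hpμev : ∀ w : ℂ, pμ.eval w = m * p.eval w - m*a*q.eval w := by
      intro w; simp [hpμ]
    have hqμne : ∀ w ∈ closure Ω, qμ.eval w ≠ 0 := by
      intro w hw hcontra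
      rw [hqμev w, sub_eq_zero] at hcontra
      have h0 : ‖q.eval w‖ = ‖m^2 * (starRingEnd ℂ) a * p.eval w‖ := by
        rw [hcontra]
      rw [norm_mul, norm_mul, norm_pow, hmabs, Complex.norm_conj] at h0
      have hqw : 0 < ‖q.eval w‖ := norm_pos_iff.mpr (hq w hw)
      have hpw := habs w hw
      have hμ2 : μ^2 ≤ 1 := by nlinarith
      have l1 : μ^2 * ‖a‖ * ‖p.eval w‖ ≤ 1 * ‖q.eval w‖ := by
        refine mul_le_mul ?_ hpw (norm_nonneg _) zero_le_one
        nlinarith [norm_nonneg a]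
      have l2 : μ^2 * ‖a‖ < 1 := by
        nlinarith [norm_nonneg a, norm_nonneg (p.eval w)]
      have l3 : 0 ≤ μ^2 * ‖a‖ := by positivity
      nlinarith [mul_le_mul_of_nonneg_left hpw l3, mul_lt_mul_of_pos_right l2 hqw]
    have hsupμ : ∀ w ∈ closure Ω, ‖pμ.eval w / qμ.eval w‖ ≤ 1 := by
      intro w hw
      rw [norm_div, div_le_one (norm_pos_iff.mpr (hqμne w hw))]
      have hw1 := habs w hw
      rw [hpμev w, hqμev w]
      have hid := nsq_id (p.eval w) (q.eval w) a μ
      rw [← hm_def] at hid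
      rw [Complex.norm_def, Complex.norm_def]
      refine Real.sqrt_le_sqrt ?_
      have h1 : Complex.normSq a ≤ 1 := by
        rw [← Complex.sq_norm]; nlinarith [norm_nonneg a]
      have h2 : Complex.normSq (p.eval w) ≤ Complex.normSq (q.eval w) := by
        rw [← Complex.sq_norm, ← Complex.sq_norm]
        exact pow_le_pow_left₀ (norm_nonneg _) hw1 2
      have hμ2 : μ^2 ≤ 1 := by nlinarith
      have f1 : 0 ≤ 1 - μ^2 * Complex.normSq a := by
        have := mul_le_mul hμ2 h1 (Complex.normSq_nonneg a) zero_le_one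
        linarith
      have f2 : 0 ≤ Complex.normSq (q.eval w) - μ^2 * Complex.normSq (p.eval w) := by
        have := mul_le_mul hμ2 h2 (Complex.normSq_nonneg (p.eval w)) zero_le_one
        linarith
      nlinarith [hid, mul_nonneg f1 f2]
    have hpz : pμ.eval z = 0 := by
      rw [hpμev z, hPa]; ring
    have h1 := hyp pμ qμ hqμne hsupμ hpz
    unfold ratNormAt at h1
    rw [hB, ratval_tri z c pμ qμ (hqμne z hzc)] at h1
    have h2 := le_trans (abs_le_norm _) h1
    rw [show (!![pμ.eval z / qμ.eval z, 0;
           c * (pμ.derivative.eval z * qμ.eval z - pμ.eval z * qμ.derivative.eval z) / qμ.eval z ^ 2,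
           pμ.eval z / qμ.eval z] : Matrix (Fin 2) (Fin 2) ℂ) 1 0
        = c * (pμ.derivative.eval z * qμ.eval z - pμ.eval z * qμ.derivative.eval z) / qμ.eval z ^ 2
        from rfl] at h2
    rw [hpz, zero_mul, sub_zero] at h2
    -- compute the pieces
    have e1 : pμ.derivative.eval z = m * (p.derivative.eval z - a * q.derivative.eval z) := by
      simp [hpμ, Polynomial.derivative_sub, Polynomial.derivative_C_mul]
      ring
    have hca : (starRingEnd ℂ) a * a = ((‖a‖ ^ 2 : ℝ) : ℂ) := by
      rw [mul_comm, Complex.mul_conj, Complex.sq_norm]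
    set s : ℝ := 1 - μ^2 * ‖a‖ ^ 2 with hs_def
    have hspos : (0:ℝ) < s := by
      have h3 : ‖a‖ ^ 2 ≤ 1 := by nlinarith [norm_nonneg a]
      have h4 : μ^2 < 1 := by nlinarith
      rw [hs_def]
      nlinarith [sq_nonneg μ, norm_nonneg a]
    have e2 : qμ.eval z = q.eval z * ((s:ℝ) : ℂ) := by
      rw [hqμev z, hPa, hs_def]
      rw [show m^2 * (starRingEnd ℂ) a * (a * q.eval z)
          = q.eval z * (m^2 * ((starRingEnd ℂ) a * a)) from by ring, hca, hm_def]
      push_cast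
      ring
    rw [e1, e2] at h2
    have habs3 : ‖c * (m * (p.derivative.eval z - a * q.derivative.eval z)
          * (q.eval z * ((s:ℝ):ℂ))) / (q.eval z * ((s:ℝ):ℂ)) ^ 2‖
        = μ * (‖c‖ * ‖p.derivative.eval z - a * q.derivative.eval z‖)
          / (‖q.eval z‖ * s) := by
      rw [norm_div, norm_pow, norm_mul, norm_mul, norm_mul, norm_mul,
        hmabs, Complex.norm_real, Real.norm_eq_abs, abs_of_pos hspos]
      rw [div_eq_div_iff (by positivity) (by positivity)]
      ring
    rw [habs3] at h2
    rw [div_le_one (mul_pos hQpos hspos)] at h2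
    rw [hK_def, show μ * (‖c‖ * ‖p.derivative.eval z - a * q.derivative.eval z‖
        / ‖q.eval z‖)
        = μ * (‖c‖ * ‖p.derivative.eval z - a * q.derivative.eval z‖)
          / ‖q.eval z‖ from by ring]
    rw [div_le_iff₀ hQpos]
    calc μ * (‖c‖ * ‖p.derivative.eval z - a * q.derivative.eval z‖)
        ≤ ‖q.eval z‖ * s := h2
      _ = s * ‖q.eval z‖ := by ring
  -- limit argument
  have hlim : Filter.Tendsto (fun μ : ℝ => 1 - μ^2 * ‖a‖ ^ 2 - μ * K)
      (nhdsWithin 1 (Set.Ioo (0:ℝ) 1)) (nhds (1 - ‖a‖ ^ 2 - K)) := by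
    have hcont : Continuous (fun μ : ℝ => 1 - μ^2 * ‖a‖ ^ 2 - μ * K) := by
      exact (continuous_const.sub ((continuous_pow 2).mul continuous_const)).sub
        (continuous_id.mul continuous_const)
    have := hcont.continuousAt (x := (1:ℝ)).tendsto
    simp only [one_pow, one_mul] at this
    exact this.mono_left nhdsWithin_le_nhds
  have hne : (nhdsWithin (1:ℝ) (Set.Ioo (0:ℝ) 1)).NeBot := by
    refine mem_closure_iff_nhdsWithin_neBot.mp ?_
    rw [closure_Ioo (by norm_num : (0:ℝ) ≠ 1)]
    exact Set.right_mem_Icc.mpr (by norm_num)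
  have hge : 0 ≤ 1 - ‖a‖ ^ 2 - K := by
    refine ge_of_tendsto hlim ?_
    refine Filter.eventually_of_mem self_mem_nhdsWithin fun μ hμ => ?_
    have := key μ hμ
    linarith
  linarith
end

section
/- Let Ω ⊆ ℂ be a bounded open set and let z ∈ Ω. Define t_Ω(z) = sSup { |deriv (fun w => p.eval w / q.eval w) z| : (p, q) an admissible rational function for Ω with ‖p/q‖_Ω ≤ 1 and p.eval z = 0 }. Let t be a real number with t > 0 and t * t_Ω(z) = 1, let λ ∈ ℂ, and let B = !![z, 0; t * λ, z]. Then ‖r(B)‖ ≤ 1 for every admissible rational function r for Ω with ‖r‖_Ω ≤ 1 if and only if |λ| ≤ 1. -/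
open Polynomial Matrix

lemma aeval_jordan (z c : ℂ) (p : ℂ[X]) :
    aeval !![z, 0; c, z] p = !![p.eval z, 0; c * p.derivative.eval z, p.eval z] := by
  induction p using Polynomial.induction_on with
  | C a =>
      rw [aeval_C]
      ext i j
      fin_cases i <;> fin_cases j <;>
        simp [Matrix.algebraMap_eq_diagonal]
  | add p q hp hq =>
      rw [map_add, hp, hq]
      ext i j
      fin_cases i <;> fin_cases j <;> simp <;> ring
  | monomial n a h =>
      rw [pow_succ, ← mul_assoc, _root_.map_mul, h, aeval_X, Matrix.mul_fin_two]
      ext i j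
      fin_cases i <;> fin_cases j <;>
        simp [Polynomial.derivative_C_mul_X_pow, pow_succ]
      cases n with
      | zero => ring
      | succ m =>
        push_cast
        simp [pow_succ]
        ring

lemma rat_jordan (z c : ℂ) (p q : ℂ[X]) (hq : q.eval z ≠ 0) :
    Polynomial.aeval !![z,0;c,z] p * (Polynomial.aeval !![z,0;c,z] q)⁻¹ =
      !![p.eval z / q.eval z, 0;
         c * ((p.derivative.eval z * q.eval z - p.eval z * q.derivative.eval z) / (q.eval z)^2),
         p.eval z / q.eval z] := by
  rw [aeval_jordan, aeval_jordan]
  have hinv : (!![q.eval z, 0; c * q.derivative.eval z, q.eval z])⁻¹ =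
      !![(q.eval z)⁻¹, 0; -(c * q.derivative.eval z) / (q.eval z)^2, (q.eval z)⁻¹] := by
    apply Matrix.inv_eq_right_inv
    rw [Matrix.mul_fin_two, Matrix.one_fin_two]
    ext i j
    fin_cases i <;> fin_cases j <;> simp <;> field_simp <;> ring
  rw [hinv, Matrix.mul_fin_two]
  ext i j
  fin_cases i <;> fin_cases j <;> simp <;> field_simp <;> ring

lemma jordan_apply (a c : ℂ) (x : EuclideanSpace ℂ (Fin 2)) :
    Matrix.toEuclideanCLM (𝕜 := ℂ) !![a, 0; c, a] x =
      (WithLp.equiv 2 (Fin 2 → ℂ)).symm ![a * x 0, c * x 0 + a * x 1] := by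
  have h : ∀ i, Matrix.toEuclideanCLM (𝕜 := ℂ) !![a, 0; c, a] x i
      = (!![a, 0; c, a]).mulVec x i := fun _ => rfl
  ext i
  fin_cases i <;>
    simp [h, Matrix.mulVec, dotProduct, Fin.sum_univ_two,
      Matrix.vecHead, Matrix.vecTail]

lemma jordan_norm_le_one (a c : ℂ) (ha : ‖a‖ ≤ 1)
    (hc : ‖c‖ ≤ 1 - (‖a‖)^2) :
    ‖Matrix.toEuclideanCLM (𝕜 := ℂ) !![a, 0; c, a]‖ ≤ 1 := by
  refine ContinuousLinearMap.opNorm_le_bound _ zero_le_one fun x => ?_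
  rw [one_mul, jordan_apply, EuclideanSpace.norm_eq, EuclideanSpace.norm_eq]
  apply Real.sqrt_le_sqrt
  simp only [Fin.sum_univ_two, WithLp.equiv_symm_apply, WithLp.ofLp_toLp, Matrix.cons_val_zero,
    Matrix.cons_val_one, Matrix.head_cons]
  have key : ‖c * x 0 + a * x 1‖
      ≤ ‖c‖ * ‖x 0‖ + ‖a‖ * ‖x 1‖ := by
    calc ‖c * x 0 + a * x 1‖ ≤ ‖c * x 0‖ + ‖a * x 1‖ :=
          norm_add_le _ _
      _ = _ := by simp [norm_mul]
  have h2 : (‖c * x 0 + a * x 1‖)^2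
      ≤ (‖c‖ * ‖x 0‖ + ‖a‖ * ‖x 1‖)^2 := by
    apply pow_le_pow_left₀ (norm_nonneg _) key
  rw [norm_mul]
  set α := ‖a‖
  set γ := ‖c‖
  set u := ‖x 0‖
  set v := ‖x 1‖
  have hα : 0 ≤ α := norm_nonneg _
  have hγ : 0 ≤ γ := norm_nonneg _
  have hu : 0 ≤ u := norm_nonneg _
  have hv : 0 ≤ v := norm_nonneg _
  nlinarith [mul_nonneg hγ (sq_nonneg (α*u - v)), mul_nonneg (sub_nonneg.2 hc) (sq_nonneg u),
    mul_nonneg (sub_nonneg.2 hc) (sq_nonneg v), sq_nonneg (α*u - v), mul_nonneg hu hv,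
    mul_nonneg (mul_nonneg hα hγ) (mul_nonneg hu hv)]

lemma jordan_norm_ge (a c : ℂ) :
    ‖c‖ ≤ ‖Matrix.toEuclideanCLM (𝕜 := ℂ) !![a, 0; c, a]‖ := by
  have h := (Matrix.toEuclideanCLM (𝕜 := ℂ) !![a, 0; c, a]).le_opNorm
    (EuclideanSpace.single 0 1)
  rw [EuclideanSpace.norm_single, norm_one, mul_one, jordan_apply] at h
  refine le_trans ?_ h
  rw [EuclideanSpace.norm_eq]
  simp only [Fin.sum_univ_two, WithLp.equiv_symm_apply, WithLp.ofLp_toLp, Matrix.cons_val_zero,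
    Matrix.cons_val_one, Matrix.head_cons,
    EuclideanSpace.single_apply]
  norm_num
  rw [Real.le_sqrt (norm_nonneg _)]
  simp [mul_one, mul_zero]
  nlinarith [sq_nonneg (‖a‖), norm_nonneg a]

lemma deriv_ratfun (p q : ℂ[X]) (z : ℂ) (hq : q.eval z ≠ 0) :
    deriv (fun w => p.eval w / q.eval w) z =
      (p.derivative.eval z * q.eval z - p.eval z * q.derivative.eval z) / (q.eval z)^2 :=
  ((p.hasDerivAt z).div (q.hasDerivAt z) hq).deriv

theorem stmt_10 (Ω : Set ℂ) (hΩo : IsOpen Ω) (hΩb : Bornology.IsBounded Ω)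
    (z : ℂ) (hzΩ : z ∈ Ω)
    (tΩ : ℝ)
    (htΩ : tΩ = sSup {x : ℝ | ∃ p q : Polynomial ℂ,
      (∀ w ∈ closure Ω, q.eval w ≠ 0) ∧
      (∀ w ∈ closure Ω, ‖p.eval w / q.eval w‖ ≤ 1) ∧
      p.eval z = 0 ∧
      x = ‖deriv (fun w : ℂ => p.eval w / q.eval w) z‖})
    (t : ℝ) (ht : 0 < t) (ht2 : t * tΩ = 1)
    (lam : ℂ)
    (B : Matrix (Fin 2) (Fin 2) ℂ)
    (hB : B = !![z, 0; (t : ℂ) * lam, z]) :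
    (∀ p q : Polynomial ℂ,
      (∀ w ∈ closure Ω, q.eval w ≠ 0) →
      (∀ w ∈ closure Ω, ‖p.eval w / q.eval w‖ ≤ 1) →
      ratNormAt B p q ≤ 1) ↔ ‖lam‖ ≤ 1 := by
  subst hB
  set S : Set ℝ := {x : ℝ | ∃ p q : Polynomial ℂ,
      (∀ w ∈ closure Ω, q.eval w ≠ 0) ∧
      (∀ w ∈ closure Ω, ‖p.eval w / q.eval w‖ ≤ 1) ∧
      p.eval z = 0 ∧
      x = ‖deriv (fun w : ℂ => p.eval w / q.eval w) z‖} with hS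
  subst htΩ
  have hzc : z ∈ closure Ω := subset_closure hzΩ
  have hsupS : 0 < sSup S := by nlinarith
  have hbdd : BddAbove S := by
    by_contra h
    rw [Real.sSup_of_not_bddAbove h] at ht2
    simp at ht2
  constructor
  · intro H
    by_cases hl : lam = 0
    · simp [hl]
    have hl' : 0 < ‖lam‖ := by
      simpa using (norm_pos_iff.mpr hl)
    have key : ∀ x ∈ S, x ≤ 1 / (t * ‖lam‖) := by
      rintro x ⟨p, q, hq, hsup, hpz, rfl⟩
      have hqz : q.eval z ≠ 0 := hq z hzc
      have hnorm := H p q hq hsup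
      unfold ratNormAt at hnorm
      rw [rat_jordan z _ p q hqz] at hnorm
      have hge := jordan_norm_ge (p.eval z / q.eval z)
        (((t : ℂ) * lam) * ((p.derivative.eval z * q.eval z
          - p.eval z * q.derivative.eval z) / (q.eval z)^2))
      have habs : ‖((t : ℂ) * lam) * ((p.derivative.eval z * q.eval z
          - p.eval z * q.derivative.eval z) / (q.eval z)^2)‖ ≤ 1 := le_trans hge hnorm
      rw [deriv_ratfun p q z hqz]
      rw [norm_mul, norm_mul] at habs
      rw [Complex.norm_real, Real.norm_eq_abs, abs_of_pos ht] at habs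
      rw [le_div_iff₀ (by positivity)]
      nlinarith [norm_nonneg ((p.derivative.eval z * q.eval z
          - p.eval z * q.derivative.eval z) / (q.eval z)^2)]
    have hle : sSup S ≤ 1 / (t * ‖lam‖) := Real.sSup_le key (by positivity)
    rw [le_div_iff₀ (by positivity)] at hle
    nlinarith
  · intro hlam p q hq hsup
    have hqz : q.eval z ≠ 0 := hq z hzc
    unfold ratNormAt
    rw [rat_jordan z _ p q hqz]
    set a : ℂ := p.eval z / q.eval z with ha
    set D : ℂ := (p.derivative.eval z * q.eval z
        - p.eval z * q.derivative.eval z) / (q.eval z)^2 with hD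
    have hderiv : deriv (fun w => p.eval w / q.eval w) z = D := deriv_ratfun p q z hqz
    have ha1 : ‖a‖ ≤ 1 := hsup z hzc
    by_cases hae : ‖a‖ = 1
    · -- maximum modulus: D = 0
      have hdiff : ∀ᶠ w in nhds z, DifferentiableAt ℂ (fun w => p.eval w / q.eval w) w := by
        filter_upwards [hΩo.mem_nhds hzΩ] with w hw
        exact ((p.differentiable.differentiableAt).div
          (q.differentiable.differentiableAt) (hq w (subset_closure hw)))
      have hmax : IsLocalMax (norm ∘ (fun w => p.eval w / q.eval w)) z := by
        filter_upwards [hΩo.mem_nhds hzΩ] with w hw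
        simp only [Function.comp_apply]
        calc ‖p.eval w / q.eval w‖ ≤ 1 := hsup w (subset_closure hw)
          _ = ‖p.eval z / q.eval z‖ := hae.symm
      have hconst := Complex.eventually_eq_of_isLocalMax_norm hdiff hmax
      have hd0 : deriv (fun w => p.eval w / q.eval w) z = 0 := by
        rw [Filter.EventuallyEq.deriv_eq hconst]
        simp
      have hD0 : D = 0 := by rw [← hderiv, hd0]
      rw [hD0, mul_zero]
      exact jordan_norm_le_one a 0 ha1 (by simp [hae])
    · have halt : ‖a‖ < 1 := lt_of_le_of_ne ha1 hae
      -- Möbius transform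
      set p₁ : ℂ[X] := p - C a * q with hp₁
      set q₁ : ℂ[X] := q - C (starRingEnd ℂ a) * p with hq₁
      have hpq : ∀ w ∈ closure Ω, ‖p.eval w‖ ≤ ‖q.eval w‖ := by
        intro w hw
        have h1 := hsup w hw
        rw [norm_div] at h1
        exact (div_le_one (norm_pos_iff.mpr (hq w hw))).mp h1
      have hq₁ne : ∀ w ∈ closure Ω, q₁.eval w ≠ 0 := by
        intro w hw hcon
        have h1 := hpq w hw
        have h2 : 0 < ‖q.eval w‖ := norm_pos_iff.mpr (hq w hw)
        simp only [hq₁, eval_sub, eval_mul, eval_C] at hcon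
        have h3 : q.eval w = (starRingEnd ℂ) a * p.eval w := sub_eq_zero.mp hcon
        have h4 : ‖q.eval w‖ = ‖a‖ * ‖p.eval w‖ := by
          rw [h3, norm_mul, Complex.norm_conj]
        nlinarith [norm_nonneg (p.eval w),
          mul_le_mul_of_nonneg_left h1 (norm_nonneg a)]
      have hq₁sup : ∀ w ∈ closure Ω, ‖p₁.eval w / q₁.eval w‖ ≤ 1 := by
        intro w hw
        rw [norm_div, div_le_one (norm_pos_iff.mpr (hq₁ne w hw))]
        simp only [hp₁, hq₁, eval_sub, eval_mul, eval_C]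
        have expand : (‖p.eval w - a * q.eval w‖)^2
            - (‖q.eval w - (starRingEnd ℂ a) * p.eval w‖)^2
            = ((‖p.eval w‖)^2 - (‖q.eval w‖)^2)
              * (1 - (‖a‖)^2) := by
          simp only [Complex.sq_norm, Complex.normSq_apply, Complex.sub_re, Complex.sub_im,
            Complex.mul_re, Complex.mul_im, Complex.conj_re, Complex.conj_im]
          ring
        have h1 := hpq w hw
        have h1sq : (‖p.eval w‖)^2 ≤ (‖q.eval w‖)^2 :=
          pow_le_pow_left₀ (norm_nonneg _) h1 2
        have hα2 : (‖a‖)^2 ≤ 1 := by nlinarith [norm_nonneg a]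
        have h2 : (‖p.eval w - a * q.eval w‖)^2
            ≤ (‖q.eval w - (starRingEnd ℂ) a * p.eval w‖)^2 := by
          nlinarith [mul_nonneg (sub_nonneg.2 h1sq) (sub_nonneg.2 hα2)]
        exact (pow_le_pow_iff_left₀ (norm_nonneg _) (norm_nonneg _)
          two_ne_zero).mp h2
      have hpz : p.eval z = a * q.eval z := by rw [ha]; field_simp
      have hp₁z : p₁.eval z = 0 := by
        simp only [hp₁, eval_sub, eval_mul, eval_C]
        rw [hpz]; ring
      have hmem : ‖deriv (fun w : ℂ => p₁.eval w / q₁.eval w) z‖ ∈ S :=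
        ⟨p₁, q₁, hq₁ne, hq₁sup, hp₁z, rfl⟩
      have hle : ‖deriv (fun w : ℂ => p₁.eval w / q₁.eval w) z‖ ≤ sSup S :=
        le_csSup hbdd hmem
      have habs2 : (0 : ℝ) < 1 - (‖a‖)^2 := by nlinarith [norm_nonneg a]
      have hcast : (1 : ℂ) - ((‖a‖ : ℝ) : ℂ)^2
          = (((1 - (‖a‖)^2 : ℝ)) : ℂ) := by push_cast; ring
      have hone : (1 : ℂ) - ((‖a‖ : ℝ) : ℂ)^2 ≠ 0 := by
        rw [hcast]
        exact_mod_cast ne_of_gt habs2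
      have hconj : (starRingEnd ℂ) a * a = ((‖a‖ : ℝ) : ℂ)^2 := by
        rw [mul_comm, Complex.mul_conj, Complex.normSq_eq_norm_sq]
        push_cast
        ring
      have e2 : q₁.eval z = q.eval z * (1 - ((‖a‖ : ℝ) : ℂ)^2) := by
        simp only [hq₁, eval_sub, eval_mul, eval_C]
        rw [hpz, ← mul_assoc, hconj]
        ring
      have e3 : p₁.derivative.eval z = p.derivative.eval z - a * q.derivative.eval z := by
        simp [hp₁, derivative_sub]
      have hd₁ : deriv (fun w : ℂ => p₁.eval w / q₁.eval w) z
          = D / (1 - ((‖a‖ : ℝ) : ℂ)^2) := by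
        rw [deriv_ratfun p₁ q₁ z (hq₁ne z hzc), hp₁z, e2, e3, hD, hpz]
        rw [zero_mul, sub_zero]
        field_simp
      have habsD : ‖deriv (fun w : ℂ => p₁.eval w / q₁.eval w) z‖
          = ‖D‖ / (1 - (‖a‖)^2) := by
        rw [hd₁, hcast, norm_div, Complex.norm_real, Real.norm_eq_abs, abs_of_pos habs2]
      have hDle : ‖D‖ ≤ sSup S * (1 - (‖a‖)^2) := by
        rw [habsD, div_le_iff₀ habs2] at hle
        linarith
      apply jordan_norm_le_one a _ ha1
      rw [norm_mul, norm_mul, Complex.norm_real, Real.norm_eq_abs, abs_of_pos ht]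
      calc t * ‖lam‖ * ‖D‖
          ≤ t * 1 * (sSup S * (1 - (‖a‖)^2)) := by
            apply mul_le_mul
            · exact mul_le_mul_of_nonneg_left hlam (le_of_lt ht)
            · exact hDle
            · exact norm_nonneg D
            · positivity
        _ = (t * sSup S) * (1 - (‖a‖)^2) := by ring
        _ = 1 - (‖a‖)^2 := by rw [ht2]; ring
end
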